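/- Let v₁ = (0,0,0), v₂ = (1000,0,0), v₃ = (437,826,0), v₄ = (82,89,−575), v₅ = (−355,666,115), v₆ = (513,601,−376), v₇ = (248,−212,142), v₈ = (−225,436,−454), v₉ = (513,−238,−456), v₁₀ = (11,534,−846) in ℝ³, and define edge vectors eᵢ = v_{i+1} − vᵢ for i = 1, …, 9 and e₁₀ = v₁ − v₁₀. Then there is no w ∈ ℝ³ such that (−1)^{i+1} (w · eᵢ) > 0 for every i ∈ {1, …, 10}. -/
import Mathlib


/-- The vertices of the paper's 10-stick polygonal realization of the knot `8_3`.
Here `vert8_3 i` is the paper's vertex `v_(i+1)`. -/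
noncomputable def vert8_3 : Fin 10 → (Fin 3 → ℝ) :=
  ![![0, 0, 0], ![1000, 0, 0], ![437, 826, 0], ![82, 89, -575], ![-355, 666, 115], ![513, 601, -376], ![248, -212, 142], ![-225, 436, -454], ![513, -238, -456], ![11, 534, -846]]

/-- The edge vectors `eᵢ = v_(i+1) − vᵢ` (cyclically, so `e₁₀ = v₁ − v₁₀`);
here `edge8_3 i` is the paper's `e_(i+1)`, using wrap-around addition on `Fin 10`. -/
noncomputable def edge8_3 (i : Fin 10) : Fin 3 → ℝ :=
  vert8_3 (i + 1) - vert8_3 i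

/-- There is no `w ∈ ℝ³` such that `(−1)^(i+1) (w · eᵢ) > 0` for every
`i ∈ {1, …, 10}`: no projection of this polygon (the knot `8_3`) to a line has
5 local maxima. (With 0-based indexing `i : Fin 10`, the sign is `(−1)^i`.) -/
theorem no_alternating_direction_8_3 :
    ¬ ∃ w : Fin 3 → ℝ, ∀ i : Fin 10,
        0 < (-1 : ℝ) ^ (i : ℕ) * ∑ j : Fin 3, w j * edge8_3 i j := by
  rintro ⟨w, h⟩
  have h0 := h 0
  have h1 := h 1
  have h2 := h 2
  have h7 := h 7
  have e0 : edge8_3 0 = ![(1000:ℝ), 0, 0] := by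
    funext j
    show ((![(1000:ℝ),0,0] - ![0,0,0] : Fin 3 → ℝ)) j = _
    fin_cases j <;> norm_num
  have e1 : edge8_3 1 = ![(-563:ℝ), 826, 0] := by
    funext j
    show ((![(437:ℝ),826,0] - ![1000,0,0] : Fin 3 → ℝ)) j = _
    fin_cases j <;> norm_num
  have e2 : edge8_3 2 = ![(-355:ℝ), -737, -575] := by
    funext j
    show ((![(82:ℝ),89,-575] - ![437,826,0] : Fin 3 → ℝ)) j = _
    fin_cases j <;> norm_num
  have e7 : edge8_3 7 = ![(738:ℝ), -674, -2] := by
    funext j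
    show ((![(513:ℝ),-238,-456] - ![-225,436,-454] : Fin 3 → ℝ)) j = _
    fin_cases j <;> norm_num
  rw [e0] at h0
  rw [e1] at h1
  rw [e2] at h2
  rw [e7] at h7
  simp only [Fin.sum_univ_three, Matrix.cons_val_zero, Matrix.cons_val_one, Matrix.head_cons,
    Matrix.cons_val_two, Matrix.tail_cons] at h0 h1 h2 h7
  simp only [show ((7 : Fin 10) : ℕ) = 7 from rfl] at h7
  norm_num at h0 h1 h2 h7
  linarith
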